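/- The triangles A₃B₃C₃ = (T_P(D₃), T_P(E₃), T_P(F₃)) and A₃'B₃'C₃' = (T_{P'}(D), T_{P'}(E), T_{P'}(F)) are translates of one another, hence congruent: T_{P'}(D) − T_P(D₃) = T_{P'}(E) − T_P(E₃) = T_{P'}(F) − T_P(F₃). -/

import Mathlib

noncomputable section

abbrev Pt := EuclideanSpace ℝ (Fin 2)

private lemma comb2 (T : Pt →ᵃ[ℝ] Pt) (a b : ℝ) (hab : a + b = 1) (x y : Pt) :
    T (a • x + b • y) = a • T x + b • T y := by
  have hz : ∀ z : Pt, T z = T.linear z + T 0 := by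
    intro z
    have := T.map_vadd 0 z
    simpa [vadd_eq_add] using this
  have hb : b = 1 - a := by linarith
  subst hb
  rw [hz (a • x + (1 - a) • y), hz x, hz y, map_add, map_smul, map_smul]
  module

set_option maxHeartbeats 1000000 in
theorem stmt9
    (A B C : Pt) (hABC : AffineIndependent ℝ ![A, B, C])
    (α β γ : ℝ) (hsum : α + β + γ = 1)
    (hα : α ≠ 0) (hβ : β ≠ 0) (hγ : γ ≠ 0)
    (hβγ : β + γ ≠ 0) (hγα : γ + α ≠ 0) (hαβ : α + β ≠ 0)
    (hs : α * β + β * γ + γ * α ≠ 0)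
    (P : Pt) (hP : P = α • A + β • B + γ • C)
    (P' : Pt)
    (hP'' : P' = (α * β + β * γ + γ * α)⁻¹ • ((β * γ) • A + (γ * α) • B + (α * β) • C))
    (D E F : Pt)
    (hD : D = (β + γ)⁻¹ • (β • B + γ • C))
    (hE : E = (γ + α)⁻¹ • (α • A + γ • C))
    (hF : F = (α + β)⁻¹ • (α • A + β • B))
    (D₃ E₃ F₃ : Pt)
    (hD₃ : D₃ = (β + γ)⁻¹ • (γ • B + β • C))
    (hE₃ : E₃ = (γ + α)⁻¹ • (γ • A + α • C))
    (hF₃ : F₃ = (α + β)⁻¹ • (β • A + α • B))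
    (TP : Pt →ᵃ[ℝ] Pt) (hTPA : TP A = D) (hTPB : TP B = E) (hTPC : TP C = F)
    (TP' : Pt →ᵃ[ℝ] Pt) (hTP'A : TP' A = D₃) (hTP'B : TP' B = E₃) (hTP'C : TP' C = F₃)
    :
    TP' D - TP D₃ = TP' E - TP E₃ ∧ TP' E - TP E₃ = TP' F - TP F₃ := by
  have e1 : TP' D = ((β + γ)⁻¹ * β) • E₃ + ((β + γ)⁻¹ * γ) • F₃ := by
    rw [hD, smul_add, smul_smul, smul_smul,
      comb2 TP' _ _ (by field_simp; try ring) B C, hTP'B, hTP'C]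
  have e2 : TP' E = ((γ + α)⁻¹ * α) • D₃ + ((γ + α)⁻¹ * γ) • F₃ := by
    rw [hE, smul_add, smul_smul, smul_smul,
      comb2 TP' _ _ (by field_simp; try ring) A C, hTP'A, hTP'C]
  have e3 : TP' F = ((α + β)⁻¹ * α) • D₃ + ((α + β)⁻¹ * β) • E₃ := by
    rw [hF, smul_add, smul_smul, smul_smul,
      comb2 TP' _ _ (by field_simp; try ring) A B, hTP'A, hTP'B]
  have f1 : TP D₃ = ((β + γ)⁻¹ * γ) • E + ((β + γ)⁻¹ * β) • F := by
    rw [hD₃, smul_add, smul_smul, smul_smul,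
      comb2 TP _ _ (by field_simp; try ring) B C, hTPB, hTPC]
  have f2 : TP E₃ = ((γ + α)⁻¹ * γ) • D + ((γ + α)⁻¹ * α) • F := by
    rw [hE₃, smul_add, smul_smul, smul_smul,
      comb2 TP _ _ (by field_simp; try ring) A C, hTPA, hTPC]
  have f3 : TP F₃ = ((α + β)⁻¹ * β) • D + ((α + β)⁻¹ * α) • E := by
    rw [hF₃, smul_add, smul_smul, smul_smul,
      comb2 TP _ _ (by field_simp; try ring) A B, hTPA, hTPB]
  have hγ' : γ = 1 - α - β := by linarith
  subst hγ'
  have hA : (1 : ℝ) - α ≠ 0 := fun h => hβγ (by linarith)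
  have hB : (1 : ℝ) - β ≠ 0 := fun h => hγα (by linarith)
  have hden1 : β + (1 - α - β) = 1 - α := by ring
  have hden2 : 1 - α - β + α = 1 - β := by ring
  constructor
  · rw [e1, e2, f1, f2, hD, hE, hF, hD₃, hE₃, hF₃]
    simp only [hden1, hden2]
    match_scalars <;> (field_simp <;> ring)
  · rw [e2, e3, f2, f3, hD, hE, hF, hD₃, hE₃, hF₃]
    simp only [hden1, hden2]
    match_scalars <;> (field_simp <;> ring)
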